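/- For every integer ν ≥ 1, the degree-ν coefficient of the formal power series exp(M(t)) = Σ_{l≥0} M(t)^l / l! is at most (1/λ)·e^λ · M_ν; that is, in positive degrees e^{M(t)} ≺ (1/λ)·e^λ · M(t). -/

import Mathlib

open Finset PowerSeries

/-- The exponential `exp(A(t)) = Σ_{l≥0} A(t)^l / l!` of a formal power series, defined
coefficientwise (the sum of coefficients converges trivially when `A` has zero constant
term, since then only the terms with `l ≤ ν` contribute in degree `ν`). -/
noncomputable def pexp (A : PowerSeries ℝ) : PowerSeries ℝ :=
  PowerSeries.mk fun ν => ∑' (l : ℕ), (1 / (Nat.factorial l : ℝ)) * PowerSeries.coeff ν (A ^ l)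

/-- Partial sums of `Σ 1/μ²` (with the `μ=0` term set to `0`) are bounded by `2 - 2/n`. -/
lemma basel_aux : ∀ n : ℕ, 1 ≤ n →
    ∑ μ ∈ Finset.range n, (if μ = 0 then (0:ℝ) else 1/(μ:ℝ)^2) ≤ 2 - 2/n := by
  intro n hn
  induction n, hn using Nat.le_induction with
  | base => norm_num
  | succ n hn ih =>
    rw [Finset.sum_range_succ]
    have hn' : (1:ℝ) ≤ (n:ℝ) := by exact_mod_cast hn
    have h1 : (0:ℝ) < (n:ℝ) := by linarith
    have h2 : (0:ℝ) < (n:ℝ)+1 := by linarith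
    have hne : n ≠ 0 := by omega
    rw [if_neg hne]
    push_cast
    have key : 1/(n:ℝ)^2 ≤ 2/(n:ℝ) - 2/((n:ℝ)+1) := by
      rw [div_sub_div _ _ h1.ne' h2.ne', div_le_div_iff₀ (by positivity) (by positivity)]
      nlinarith
    linarith

lemma basel_aux2 (n : ℕ) :
    ∑ μ ∈ Finset.range (n+1), (if μ = 0 then (0:ℝ) else 1/(μ:ℝ)^2) ≤ 2 := by
  have h := basel_aux (n+1) (by omega)
  have : (0:ℝ) ≤ 2/((n:ℝ)+1) := by positivity
  push_cast at h ⊢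
  linarith

lemma quad_term (a b : ℝ) (ha : 0 < a) (hb : 0 < b) :
    1/(a^2*b^2) ≤ 2/(a+b)^2 * (1/a^2 + 1/b^2) := by
  have h : (a+b)^2 ≤ 2*(a^2+b^2) := by nlinarith [sq_nonneg (a-b)]
  rw [div_add_div _ _ (by positivity) (by positivity), div_mul_div_comm,
    div_le_div_iff₀ (by positivity) (by positivity)]
  nlinarith [mul_pos (mul_pos ha ha) (mul_pos hb hb), sq_nonneg (a-b),
    mul_pos ha hb, mul_le_mul_of_nonneg_right h (by positivity : (0:ℝ) ≤ a^2*b^2)]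


/-- The comparison sequence `1/μ²` (zero at `μ = 0`). -/
noncomputable def hfun (mu : ℕ) : ℝ := if mu = 0 then 0 else 1/(mu:ℝ)^2

lemma hfun_nonneg (mu : ℕ) : 0 ≤ hfun mu := by
  unfold hfun; split
  · exact le_refl 0
  · positivity

lemma hfun_sum_le (n : ℕ) : ∑ k ∈ Finset.range (n+1), hfun k ≤ 2 := by
  simpa [hfun] using basel_aux2 n

/-- Fix `c > 0`, `λ = 1/c`, and the majorant series `M(t)` with
coefficients `M ν = (1/(16c))·c^ν/ν²` and zero constant term. Then for every `ν ≥ 1` the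
degree-`ν` coefficient of `exp(M(t)) = Σ_{l≥0} M(t)^l/l!` is at most `(1/λ)·e^λ·M ν`;
that is, in positive degrees `e^{M(t)} ≺ (1/λ)·e^λ·M(t)`. -/
theorem stmt_3 (c lam : ℝ) (hc : 0 < c) (hlam : lam = 1 / c)
    (M : ℕ → ℝ) (hM : ∀ ν : ℕ, M ν = 1 / (16 * c) * c ^ ν / (ν : ℝ) ^ 2)
    (Mser : PowerSeries ℝ)
    (hMser : Mser = PowerSeries.mk fun ν => if ν = 0 then 0 else M ν) :
    ∀ ν : ℕ, 1 ≤ ν →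
      PowerSeries.coeff ν (pexp Mser) ≤ (1 / lam) * Real.exp lam * M ν := by
  have hlampos : 0 < lam := by rw [hlam]; positivity
  set m : ℕ → ℝ := fun ν => if ν = 0 then 0 else M ν with hm
  have hcoeff : ∀ ν, PowerSeries.coeff ν Mser = m ν := by
    intro ν; rw [hMser, PowerSeries.coeff_mk]
  have hm0 : m 0 = 0 := by simp [hm]
  have hmnonneg : ∀ ν, 0 ≤ m ν := by
    intro ν
    simp only [hm]
    split
    · exact le_refl 0
    · rw [hM]; positivity
  -- quadratic bound : coeff of Mser² is dominated by lam · m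
  have hsq : ∀ ν : ℕ, PowerSeries.coeff ν (Mser * Mser) ≤ lam * m ν := by
    intro ν
    rcases Nat.eq_zero_or_pos ν with h0 | hpos
    · subst h0
      rw [PowerSeries.coeff_mul]
      simp [Finset.Nat.antidiagonal_zero, hcoeff, hm0]
    · have hνR : (0:ℝ) < (ν:ℝ) := by exact_mod_cast hpos
      set K : ℝ := (1/(16*c))^2 * c^ν with hK
      have hKpos : 0 < K := by positivity
      rw [PowerSeries.coeff_mul]
      have hterm : ∀ p ∈ antidiagonal ν,
          PowerSeries.coeff p.1 Mser * PowerSeries.coeff p.2 Mser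
            ≤ K * (2/(ν:ℝ)^2) * (hfun p.1 + hfun p.2) := by
        intro p hp
        have hpsum : p.1 + p.2 = ν := Finset.HasAntidiagonal.mem_antidiagonal.mp hp
        rw [hcoeff, hcoeff]
        rcases eq_or_ne p.1 0 with h1 | h1
        · rw [h1, hm0, zero_mul]
          exact mul_nonneg (by positivity) (add_nonneg (hfun_nonneg _) (hfun_nonneg _))
        rcases eq_or_ne p.2 0 with h2 | h2
        · rw [h2, hm0, mul_zero]
          exact mul_nonneg (by positivity) (add_nonneg (hfun_nonneg _) (hfun_nonneg _))
        have hμ : (0:ℝ) < (p.1:ℝ) := by exact_mod_cast Nat.pos_of_ne_zero h1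
        have hκ : (0:ℝ) < (p.2:ℝ) := by exact_mod_cast Nat.pos_of_ne_zero h2
        have hνμκ : (p.1:ℝ) + (p.2:ℝ) = (ν:ℝ) := by exact_mod_cast congrArg Nat.cast hpsum
        have hcc : c^p.1 * c^p.2 = c^ν := by rw [← pow_add, hpsum]
        have lhs_eq : m p.1 * m p.2 = K * (1/((p.1:ℝ)^2*(p.2:ℝ)^2)) := by
          simp only [hm]
          rw [if_neg h1, if_neg h2, hM, hM, hK, ← hcc]
          field_simp
        have rhs_eq : K * (2/(ν:ℝ)^2) * (hfun p.1 + hfun p.2)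
            = K * (2/((p.1:ℝ)+(p.2:ℝ))^2 * (1/(p.1:ℝ)^2 + 1/(p.2:ℝ)^2)) := by
          unfold hfun
          rw [if_neg h1, if_neg h2, hνμκ]
          ring
        rw [lhs_eq, rhs_eq]
        exact mul_le_mul_of_nonneg_left (quad_term _ _ hμ hκ) hKpos.le
      calc ∑ p ∈ antidiagonal ν, PowerSeries.coeff p.1 Mser * PowerSeries.coeff p.2 Mser
          ≤ ∑ p ∈ antidiagonal ν, K * (2/(ν:ℝ)^2) * (hfun p.1 + hfun p.2) :=
            Finset.sum_le_sum hterm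
        _ = K * (2/(ν:ℝ)^2) * ∑ p ∈ antidiagonal ν, (hfun p.1 + hfun p.2) := by
            rw [← Finset.mul_sum]
        _ ≤ K * (2/(ν:ℝ)^2) * 4 := by
            apply mul_le_mul_of_nonneg_left _ (by positivity)
            have e1 : ∑ p ∈ antidiagonal ν, hfun p.1 = ∑ k ∈ Finset.range (ν+1), hfun k :=
              Finset.Nat.sum_antidiagonal_eq_sum_range_succ_mk (fun p => hfun p.1) ν
            have e2 : ∑ p ∈ antidiagonal ν, hfun p.2
                = ∑ k ∈ Finset.range (ν+1), hfun (ν - k) :=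
              Finset.Nat.sum_antidiagonal_eq_sum_range_succ_mk (fun p => hfun p.2) ν
            have e3 : ∑ k ∈ Finset.range (ν+1), hfun (ν - k)
                = ∑ k ∈ Finset.range (ν+1), hfun k := by
              simpa using Finset.sum_range_reflect hfun (ν+1)
            rw [Finset.sum_add_distrib, e1, e2, e3]
            have hb := hfun_sum_le ν
            linarith
        _ = (8*(1/(16*c))^2) * (c^ν/(ν:ℝ)^2) := by rw [hK]; ring
        _ ≤ ((1/c)*(1/(16*c))) * (c^ν/(ν:ℝ)^2) := by
            apply mul_le_mul_of_nonneg_right _ (by positivity)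
            rw [div_mul_div_comm, one_mul, div_pow, one_pow, mul_one_div,
              div_le_div_iff₀ (by positivity) (by positivity)]
            nlinarith [mul_pos hc hc]
        _ = lam * m ν := by
            simp only [hm]
            rw [if_neg (by omega), hM, hlam]
            ring
  -- power bound
  have hpow : ∀ l : ℕ, ∀ ν : ℕ, PowerSeries.coeff ν (Mser^(l+1)) ≤ lam^l * m ν := by
    intro l
    induction l with
    | zero => intro ν; simp [hcoeff]
    | succ l ih =>
      intro ν
      have hstep : Mser^(l+1+1) = Mser^(l+1) * Mser := by ring
      rw [hstep, PowerSeries.coeff_mul]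
      calc ∑ p ∈ antidiagonal ν, PowerSeries.coeff p.1 (Mser^(l+1)) * PowerSeries.coeff p.2 Mser
          ≤ ∑ p ∈ antidiagonal ν, lam^l * (m p.1 * m p.2) := by
            apply Finset.sum_le_sum
            intro p _
            rw [hcoeff, ← mul_assoc]
            exact mul_le_mul_of_nonneg_right (ih p.1) (hmnonneg p.2)
        _ = lam^l * PowerSeries.coeff ν (Mser * Mser) := by
            rw [PowerSeries.coeff_mul, Finset.mul_sum]
            simp [hcoeff]
        _ ≤ lam^l * (lam * m ν) :=
            mul_le_mul_of_nonneg_left (hsq ν) (pow_nonneg hlampos.le l)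
        _ = lam^(l+1) * m ν := by ring
  -- vanishing in low degrees
  have hvanish : ∀ l ν : ℕ, ν < l → PowerSeries.coeff ν (Mser ^ l) = 0 := by
    intro l ν h
    have hX : (PowerSeries.X : PowerSeries ℝ) ∣ Mser := by
      rw [PowerSeries.X_dvd_iff, hMser]
      simpa using hm0
    exact PowerSeries.X_pow_dvd_iff.mp (pow_dvd_pow_of_dvd hX l) ν h
  intro ν hν
  have hmν : m ν = M ν := by simp only [hm]; rw [if_neg (by omega)]
  have hfin : PowerSeries.coeff ν (pexp Mser)
      = ∑ l ∈ Finset.range (ν+1), (1 / (Nat.factorial l : ℝ)) * PowerSeries.coeff ν (Mser^l) := by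
    rw [pexp, PowerSeries.coeff_mk]
    apply tsum_eq_sum
    intro l hl
    rw [hvanish l ν (by simpa using hl), mul_zero]
  rw [hfin, Finset.sum_range_succ']
  have hzero : (1 / (Nat.factorial 0 : ℝ)) * PowerSeries.coeff ν (Mser^0) = 0 := by
    simp only [pow_zero, PowerSeries.coeff_one, Nat.factorial_zero, Nat.cast_one]
    rw [if_neg (by omega : ¬ν = 0), mul_zero]
  rw [hzero, add_zero]
  have hsum : ∑ l ∈ Finset.range ν, (1 / (Nat.factorial (l+1) : ℝ)) * PowerSeries.coeff ν (Mser^(l+1))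
      ≤ (∑ l ∈ Finset.range ν, lam^(l+1) / (Nat.factorial (l+1) : ℝ)) * ((1/lam) * m ν) := by
    rw [Finset.sum_mul]
    apply Finset.sum_le_sum
    intro l _
    have h1 : (0:ℝ) ≤ 1 / (Nat.factorial (l+1) : ℝ) := by positivity
    calc (1 / (Nat.factorial (l+1) : ℝ)) * PowerSeries.coeff ν (Mser^(l+1))
        ≤ (1 / (Nat.factorial (l+1) : ℝ)) * (lam^l * m ν) :=
          mul_le_mul_of_nonneg_left (hpow l ν) h1
      _ = lam^(l+1) / (Nat.factorial (l+1) : ℝ) * ((1/lam) * m ν) := by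
          field_simp
          ring
  have hexp : ∑ l ∈ Finset.range ν, lam^(l+1) / (Nat.factorial (l+1) : ℝ) ≤ Real.exp lam := by
    have h := Real.sum_le_exp_of_nonneg hlampos.le (ν+1)
    rw [Finset.sum_range_succ'] at h
    simp only [pow_zero, Nat.factorial_zero, Nat.cast_one, div_one] at h
    linarith
  calc ∑ l ∈ Finset.range ν, (1 / (Nat.factorial (l+1) : ℝ)) * PowerSeries.coeff ν (Mser^(l+1))
      ≤ (∑ l ∈ Finset.range ν, lam^(l+1) / (Nat.factorial (l+1) : ℝ)) * ((1/lam) * m ν) := hsum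
    _ ≤ Real.exp lam * ((1/lam) * m ν) := by
        apply mul_le_mul_of_nonneg_right hexp
        exact mul_nonneg (by positivity) (hmnonneg ν)
    _ = (1 / lam) * Real.exp lam * M ν := by rw [hmν]; ring
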